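/- The signaling dimension of the square bit equals two: the minimal natural number d such that for all positive integers m, n, every matrix in P_sq^{m→n} belongs to the classical polytope P_d^{m→n} is d = 2. -/

import Mathlib

open Matrix Finset

set_option maxHeartbeats 1000000

noncomputable section

/-- Extremal squit states. -/
def sqState : Fin 4 → Fin 3 → ℝ :=
  ![![1, 0, 1], ![0, 1, 1], ![-1, 0, 1], ![0, -1, 1]]

/-- Extremal normalized squit effects. -/
def sqEffect : Fin 4 → Fin 3 → ℝ :=
  ![![1, 1, 1], ![-1, 1, 1], ![-1, -1, 1], ![1, -1, 1]]

/-- The unit effect of the squit. -/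
def sqUnit : Fin 3 → ℝ := ![0, 0, 1]

/-- Deterministic strategies of dimension `d`: 0/1 matrices with exactly one
entry `1` in each row and at most `d` nonzero columns. -/
def detStrategies (m n d : ℕ) : Set (Fin m → Fin n → ℝ) :=
  {v | ∃ g : Fin m → Fin n, (Finset.univ.image g).card ≤ d ∧
        ∀ x y, v x y = if g x = y then 1 else 0}

/-- The classical polytope `P_d^{m→n}`. -/
def classicalPolytope (m n d : ℕ) : Set (Fin m → Fin n → ℝ) :=
  convexHull ℝ (detStrategies m n d)

/-- The `m`-input/`n`-output correlations achievable by the squit with shared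
randomness. -/
def Psq (m n : ℕ) : Set (Fin m → Fin n → ℝ) :=
  {p | ∃ (L : ℕ) (q : Fin L → ℝ) (st : Fin m → Fin L → Fin 3 → ℝ)
        (ms : Fin L → Fin n → Fin 3 → ℝ),
      (∀ l, 0 ≤ q l) ∧ (∑ l, q l = 1) ∧
      (∀ x l, st x l ∈ convexHull ℝ (Set.range sqState)) ∧
      (∀ l, (∀ y, ∃ t : ℝ, 0 ≤ t ∧ ∃ c ∈ convexHull ℝ (Set.range sqEffect),
                ms l y = t • c) ∧
            ∑ y, ms l y = sqUnit) ∧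
      (∀ x y, p x y = ∑ l, q l * (st x l ⬝ᵥ ms l y))}

/-- support of a 4×n matrix -/
def suppF {n : ℕ} (p : Fin 4 → Fin n → ℝ) : Finset (Fin 4 × Fin n) :=
  Finset.univ.filter (fun e => p e.1 e.2 ≠ 0)

lemma support_claim {n : ℕ} (p : Fin 4 → Fin n → ℝ)
    (hnn : ∀ i y, 0 ≤ p i y)
    (hbal : ∀ y, p 0 y + p 2 y = p 1 y + p 3 y)
    (a0 a1 a2 a3 : Fin n)
    (h0 : 0 < p 0 a0) (h1 : 0 < p 1 a1) (h2 : 0 < p 2 a2) (h3 : 0 < p 3 a3) :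
    ∃ y y', (0 < p 0 y ∧ 0 < p 1 y ∧ 0 < p 2 y' ∧ 0 < p 3 y') ∨
            (0 < p 0 y ∧ 0 < p 3 y ∧ 0 < p 2 y' ∧ 0 < p 1 y') := by
  by_cases hAB : ∃ y, 0 < p 0 y ∧ 0 < p 1 y
  · obtain ⟨ya, hya0, hya1⟩ := hAB
    by_cases hCD : ∃ y, 0 < p 2 y ∧ 0 < p 3 y
    · obtain ⟨yc, hyc2, hyc3⟩ := hCD
      exact ⟨ya, yc, Or.inl ⟨hya0, hya1, hyc2, hyc3⟩⟩
    · push_neg at hCD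
      have hp2a3 : p 2 a3 = 0 := by
        by_contra h
        have := hCD a3 (lt_of_le_of_ne (hnn 2 a3) (Ne.symm h)); linarith
      have hp0a3 : 0 < p 0 a3 := by
        have := hbal a3; have := hnn 1 a3; linarith
      have hp3a2 : p 3 a2 = 0 := by
        have := hCD a2 h2; have := hnn 3 a2; linarith
      have hp1a2 : 0 < p 1 a2 := by
        have := hbal a2; have := hnn 0 a2; linarith
      exact ⟨a3, a2, Or.inr ⟨hp0a3, h3, h2, hp1a2⟩⟩
  · push_neg at hAB
    have hp1a0 : p 1 a0 = 0 := by
      have := hAB a0 h0; have := hnn 1 a0; linarith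
    have hp3a0 : 0 < p 3 a0 := by
      have := hbal a0; have := hnn 2 a0; linarith
    have hp0a1 : p 0 a1 = 0 := by
      by_contra h
      have := hAB a1 (lt_of_le_of_ne (hnn 0 a1) (Ne.symm h)); linarith
    have hp2a1 : 0 < p 2 a1 := by
      have := hbal a1; have := hnn 3 a1; linarith
    exact ⟨a0, a1, Or.inr ⟨h0, hp3a0, hp2a1, h1⟩⟩

lemma coreDecomp (N : ℕ) : ∀ (n : ℕ) (p : Fin 4 → Fin n → ℝ),
    (suppF p).card ≤ N →
    (∀ i y, 0 ≤ p i y) →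
    (∀ y, p 0 y + p 2 y = p 1 y + p 3 y) →
    (∀ i, ∑ y, p i y = ∑ y, p 0 y) →
    ∃ (K : ℕ) (w : Fin K → ℝ) (g : Fin K → Fin 4 → Fin n),
      (∀ k, 0 ≤ w k) ∧ (∀ k, ((univ : Finset (Fin 4)).image (g k)).card ≤ 2) ∧
      (∀ i y, p i y = ∑ k, w k * (if g k i = y then 1 else 0)) := by
  induction N with
  | zero =>
    intro n p hcard hnn hbal hsum
    have hz : ∀ i y, p i y = 0 := by
      intro i y
      by_contra h
      have : (i, y) ∈ suppF p := by simp [suppF, h]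
      have := Finset.card_pos.mpr ⟨_, this⟩
      omega
    exact ⟨0, Fin.elim0, Fin.elim0, fun k => k.elim0, fun k => k.elim0,
      fun i y => by simp [hz]⟩
  | succ N ih =>
    intro n p hcard hnn hbal hsum
    by_cases hz : ∀ i y, p i y = 0
    · exact ⟨0, Fin.elim0, Fin.elim0, fun k => k.elim0, fun k => k.elim0,
        fun i y => by simp [hz]⟩
    push_neg at hz
    obtain ⟨i0, y0, hi0⟩ := hz
    have hc : 0 < ∑ y, p 0 y := by
      rw [← hsum i0]
      have h1 : 0 < p i0 y0 := lt_of_le_of_ne (hnn i0 y0) (Ne.symm hi0)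
      have h2 : p i0 y0 ≤ ∑ y, p i0 y :=
        Finset.single_le_sum (fun y _ => hnn i0 y) (mem_univ y0)
      linarith
    have hrowpos : ∀ i : Fin 4, ∃ y, 0 < p i y := by
      intro i
      by_contra h
      push_neg at h
      have : ∑ y, p i y = 0 :=
        Finset.sum_eq_zero (fun y _ => le_antisymm (h y) (hnn i y))
      rw [hsum i] at this; linarith
    obtain ⟨a0, ha0⟩ := hrowpos 0
    obtain ⟨a1, ha1⟩ := hrowpos 1
    obtain ⟨a2, ha2⟩ := hrowpos 2
    obtain ⟨a3, ha3⟩ := hrowpos 3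
    obtain ⟨y, y', hcase⟩ := support_claim p hnn hbal a0 a1 a2 a3 ha0 ha1 ha2 ha3
    -- build the pattern G
    obtain ⟨G, hGpos, hGbal, hGim⟩ :
        ∃ G : Fin 4 → Fin n, (∀ i, 0 < p i (G i)) ∧
          (∀ z : Fin n, ((if G 0 = z then (1:ℝ) else 0) + (if G 2 = z then 1 else 0)) =
            ((if G 1 = z then 1 else 0) + (if G 3 = z then 1 else 0))) ∧
          ((univ : Finset (Fin 4)).image G).card ≤ 2 := by
      rcases hcase with ⟨hy0, hy1, hy2, hy3⟩ | ⟨hy0, hy3, hy2, hy1⟩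
      · refine ⟨![y, y, y', y'], ?_, ?_, ?_⟩
        · intro i; fin_cases i <;> simpa
        · intro z; rfl
        · refine le_trans (Finset.card_le_card (t := {y, y'}) ?_) ?_
          · intro z hz
            simp only [Finset.mem_image] at hz
            obtain ⟨i, _, rfl⟩ := hz
            fin_cases i <;> simp
          · exact le_trans (Finset.card_insert_le _ _) (by simp)
      · refine ⟨![y, y', y', y], ?_, ?_, ?_⟩
        · intro i; fin_cases i <;> simpa
        · intro z; exact add_comm _ _
        · refine le_trans (Finset.card_le_card (t := {y, y'}) ?_) ?_
          · intro z hz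
            simp only [Finset.mem_image] at hz
            obtain ⟨i, _, rfl⟩ := hz
            fin_cases i <;> simp
          · exact le_trans (Finset.card_insert_le _ _) (by simp)
    set lam : ℝ := min (min (p 0 (G 0)) (p 1 (G 1))) (min (p 2 (G 2)) (p 3 (G 3))) with hlam
    have hlampos : 0 < lam :=
      lt_min (lt_min (hGpos 0) (hGpos 1)) (lt_min (hGpos 2) (hGpos 3))
    have hlamle : ∀ i, lam ≤ p i (G i) := by
      intro i; fin_cases i
      · exact le_trans (min_le_left _ _) (min_le_left _ _)
      · exact le_trans (min_le_left _ _) (min_le_right _ _)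
      · exact le_trans (min_le_right _ _) (min_le_left _ _)
      · exact le_trans (min_le_right _ _) (min_le_right _ _)
    have hlameq : ∃ i : Fin 4, p i (G i) = lam := by
      rcases min_choice (min (p 0 (G 0)) (p 1 (G 1))) (min (p 2 (G 2)) (p 3 (G 3))) with h | h
      · rcases min_choice (p 0 (G 0)) (p 1 (G 1)) with h' | h'
        · exact ⟨0, by rw [hlam, h, h']⟩
        · exact ⟨1, by rw [hlam, h, h']⟩
      · rcases min_choice (p 2 (G 2)) (p 3 (G 3)) with h' | h'
        · exact ⟨2, by rw [hlam, h, h']⟩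
        · exact ⟨3, by rw [hlam, h, h']⟩
    set p' : Fin 4 → Fin n → ℝ :=
      fun i z => p i z - lam * (if G i = z then 1 else 0) with hp'
    have hnn' : ∀ i z, 0 ≤ p' i z := by
      intro i z
      by_cases h : G i = z
      · have := hlamle i; simp [hp', h] at *; linarith [this]
      · simp [hp', h, hnn i z]
    have hbal' : ∀ z, p' 0 z + p' 2 z = p' 1 z + p' 3 z := by
      intro z
      have h1 := hbal z
      have h2 := hGbal z
      simp only [hp']
      nlinarith [h2]
    have hsum' : ∀ i, ∑ z, p' i z = ∑ z, p' 0 z := by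
      intro i
      have key : ∀ j : Fin 4, ∑ z, p' j z = (∑ z, p j z) - lam := by
        intro j
        simp only [hp', Finset.sum_sub_distrib, ← Finset.mul_sum]
        rw [Finset.sum_ite_eq]
        simp
      rw [key i, key 0, hsum i]
    have hsupp : suppF p' ⊂ suppF p := by
      constructor
      · intro e he
        simp only [suppF, Finset.mem_filter, Finset.mem_univ, true_and] at he ⊢
        intro h
        apply he
        by_cases hG : G e.1 = e.2
        · have := hnn' e.1 e.2
          have := hlamle e.1
          rw [hG] at this
          simp only [hp', hG, if_pos rfl, mul_one] at *
          linarith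
        · simp [hp', hG, h]
      · obtain ⟨istar, hstar⟩ := hlameq
        intro hsub
        have h1 : (istar, G istar) ∈ suppF p := by
          simp [suppF]; exact ne_of_gt (hGpos istar)
        have h2 := hsub h1
        simp only [suppF, Finset.mem_filter, Finset.mem_univ, true_and] at h2
        apply h2
        simp [hp', hstar]
    have hcard' : (suppF p').card ≤ N := by
      have := Finset.card_lt_card hsupp
      omega
    obtain ⟨K, w, g, hw0, hgim, hrep⟩ := ih n p' hcard' hnn' hbal' hsum'
    refine ⟨K + 1, Fin.cons lam w, Fin.cons G g, ?_, ?_, ?_⟩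
    · intro k
      refine Fin.cases ?_ ?_ k
      · simpa using le_of_lt hlampos
      · intro k'; simpa using hw0 k'
    · intro k
      refine Fin.cases ?_ ?_ k
      · simpa using hGim
      · intro k'; simpa using hgim k'
    · intro i z
      rw [Fin.sum_univ_succ]
      simp only [Fin.cons_succ, Fin.cons_zero]
      have := hrep i z
      simp only [hp'] at this
      linarith

lemma state_bound :
    convexHull ℝ (Set.range sqState) ⊆
      {w : Fin 3 → ℝ | |w 0| + |w 1| ≤ 1 ∧ w 2 = 1} := by
  apply convexHull_min
  · rintro _ ⟨i, rfl⟩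
    fin_cases i <;> constructor <;> norm_num [sqState, Matrix.cons_val_two, Matrix.vecHead, Matrix.vecTail]
  · rintro x ⟨hx1, hx2⟩ z ⟨hz1, hz2⟩ a b ha hb hab
    constructor
    · have h0 : |(a • x + b • z) 0| ≤ a * |x 0| + b * |z 0| := by
        simp only [Pi.add_apply, Pi.smul_apply, smul_eq_mul]
        calc |a * x 0 + b * z 0| ≤ |a * x 0| + |b * z 0| := abs_add_le _ _
          _ = a * |x 0| + b * |z 0| := by
            rw [abs_mul, abs_mul, abs_of_nonneg ha, abs_of_nonneg hb]
      have h1 : |(a • x + b • z) 1| ≤ a * |x 1| + b * |z 1| := by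
        simp only [Pi.add_apply, Pi.smul_apply, smul_eq_mul]
        calc |a * x 1 + b * z 1| ≤ |a * x 1| + |b * z 1| := abs_add_le _ _
          _ = a * |x 1| + b * |z 1| := by
            rw [abs_mul, abs_mul, abs_of_nonneg ha, abs_of_nonneg hb]
      nlinarith
    · simp only [Pi.add_apply, Pi.smul_apply, smul_eq_mul, hx2, hz2]
      linarith

lemma effect_bound :
    convexHull ℝ (Set.range sqEffect) ⊆
      {c : Fin 3 → ℝ | |c 0| ≤ 1 ∧ |c 1| ≤ 1 ∧ c 2 = 1} := by
  apply convexHull_min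
  · rintro _ ⟨i, rfl⟩
    fin_cases i <;> refine ⟨?_, ?_, ?_⟩ <;> norm_num [sqEffect, Matrix.cons_val_two, Matrix.vecHead, Matrix.vecTail]
  · rintro x ⟨hx0, hx1, hx2⟩ z ⟨hz0, hz1, hz2⟩ a b ha hb hab
    refine ⟨?_, ?_, ?_⟩
    · simp only [Pi.add_apply, Pi.smul_apply, smul_eq_mul]
      calc |a * x 0 + b * z 0| ≤ |a * x 0| + |b * z 0| := abs_add_le _ _
        _ = a * |x 0| + b * |z 0| := by
          rw [abs_mul, abs_mul, abs_of_nonneg ha, abs_of_nonneg hb]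
        _ ≤ a * 1 + b * 1 := by
          gcongr
        _ = 1 := by linarith
    · simp only [Pi.add_apply, Pi.smul_apply, smul_eq_mul]
      calc |a * x 1 + b * z 1| ≤ |a * x 1| + |b * z 1| := abs_add_le _ _
        _ = a * |x 1| + b * |z 1| := by
          rw [abs_mul, abs_mul, abs_of_nonneg ha, abs_of_nonneg hb]
        _ ≤ a * 1 + b * 1 := by
          gcongr
        _ = 1 := by linarith
    · simp only [Pi.add_apply, Pi.smul_apply, smul_eq_mul, hx2, hz2]
      linarith

lemma rowMix {m n : ℕ} (lam : Fin m → Fin 4 → ℝ)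
    (hl0 : ∀ x i, 0 ≤ lam x i) (hl1 : ∀ x, ∑ i, lam x i = 1)
    (gk : Fin 4 → Fin n) (hgk : ((univ : Finset (Fin 4)).image gk).card ≤ 2) :
    (fun x y => ∑ i, lam x i * (if gk i = y then 1 else 0)) ∈
      classicalPolytope m n 2 := by
  have expand : ∀ x y,
      ∑ σ : Fin m → Fin 4, (∏ x', lam x' (σ x')) * (if gk (σ x) = y then (1:ℝ) else 0)
        = ∑ i, lam x i * (if gk i = y then 1 else 0) := by
    intro x y
    have h1 : ∀ σ : Fin m → Fin 4,
        (∏ x', lam x' (σ x')) * (if gk (σ x) = y then (1:ℝ) else 0)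
          = ∏ x', (lam x' (σ x') *
              (if x' = x then (if gk (σ x') = y then 1 else 0) else 1)) := by
      intro σ
      rw [Finset.prod_mul_distrib,
        Finset.prod_ite_eq' univ x (fun x' => if gk (σ x') = y then (1:ℝ) else 0)]
      simp
    calc ∑ σ : Fin m → Fin 4, (∏ x', lam x' (σ x')) * (if gk (σ x) = y then (1:ℝ) else 0)
        = ∑ σ ∈ Fintype.piFinset (fun _ : Fin m => (univ : Finset (Fin 4))),
            ∏ x', (lam x' (σ x') *
              (if x' = x then (if gk (σ x') = y then 1 else 0) else 1)) := by
          rw [Fintype.piFinset_univ]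
          exact Finset.sum_congr rfl (fun σ _ => h1 σ)
      _ = ∏ x', ∑ i : Fin 4, (lam x' i *
              (if x' = x then (if gk i = y then (1:ℝ) else 0) else 1)) :=
          (Finset.prod_univ_sum (fun _ : Fin m => (univ : Finset (Fin 4)))
            (fun x' i => lam x' i *
              (if x' = x then (if gk i = y then (1:ℝ) else 0) else 1))).symm
      _ = ∏ x', (if x' = x then (∑ i, lam x i * (if gk i = y then (1:ℝ) else 0)) else 1) := by
          apply Finset.prod_congr rfl
          intro x' _
          by_cases hx : x' = x
          · subst hx; simp
          · simp [hx, hl1 x']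
      _ = ∑ i, lam x i * (if gk i = y then 1 else 0) := by
          rw [Finset.prod_ite_eq' univ x
            (fun _ => ∑ i, lam x i * (if gk i = y then (1:ℝ) else 0))]
          simp
  have hwsum : ∑ σ : Fin m → Fin 4, ∏ x, lam x (σ x) = 1 := by
    have : ∏ x, ∑ i, lam x i
        = ∑ σ ∈ Fintype.piFinset (fun _ : Fin m => (univ : Finset (Fin 4))),
            ∏ x, lam x (σ x) := Finset.prod_univ_sum _ _
    rw [Fintype.piFinset_univ] at this
    rw [← this]
    simp [hl1]
  have hmem : ∀ σ : Fin m → Fin 4,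
      (fun x y => if gk (σ x) = y then (1:ℝ) else 0) ∈ detStrategies m n 2 := by
    intro σ
    refine ⟨gk ∘ σ, ?_, fun x y => rfl⟩
    refine le_trans (Finset.card_le_card ?_) hgk
    intro z hz
    simp only [Finset.mem_image] at hz ⊢
    obtain ⟨x, _, rfl⟩ := hz
    exact ⟨σ x, mem_univ _, rfl⟩
  have key : (fun x y => ∑ i, lam x i * (if gk i = y then (1:ℝ) else 0))
      = ∑ σ : Fin m → Fin 4, (∏ x, lam x (σ x)) •
          (fun x y => if gk (σ x) = y then (1:ℝ) else 0) := by
    funext x y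
    rw [← expand x y]
    simp [Finset.sum_apply, Pi.smul_apply, smul_eq_mul]
  rw [key]
  exact (convex_convexHull ℝ _).sum_mem
    (fun σ _ => Finset.prod_nonneg (fun x _ => hl0 x (σ x)))
    hwsum
    (fun σ _ => subset_convexHull ℝ _ (hmem σ))

lemma max_neg_add (w : ℝ) : max w 0 + max (-w) 0 = |w| := by
  rcases le_total 0 w with h | h
  · rw [max_eq_left h, max_eq_right (neg_nonpos.mpr h), abs_of_nonneg h]; ring
  · rw [max_eq_right h, max_eq_left (neg_nonneg.mpr h), abs_of_nonpos h]; ring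

lemma max_neg_sub (w : ℝ) : max w 0 - max (-w) 0 = w := by
  rcases le_total 0 w with h | h
  · rw [max_eq_left h, max_eq_right (neg_nonpos.mpr h)]; ring
  · rw [max_eq_right h, max_eq_left (neg_nonneg.mpr h)]; ring

lemma psq_subset_two (m n : ℕ) : Psq m n ⊆ classicalPolytope m n 2 := by
  rintro p ⟨L, q, st, ms, hq0, hq1, hst, hms, hp⟩
  have hpeq : p = ∑ l, q l • (fun x y => st x l ⬝ᵥ ms l y) := by
    funext x y
    rw [hp x y]
    simp [Finset.sum_apply, Pi.smul_apply, smul_eq_mul]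
  rw [hpeq]
  refine (convex_convexHull ℝ _).sum_mem (fun l _ => hq0 l) hq1 (fun l _ => ?_)
  obtain ⟨hmeas, hunit⟩ := hms l
  choose t ht0 c hc hmc using hmeas
  have hc2 : ∀ y, c y 2 = 1 := fun y => (effect_bound (hc y)).2.2
  have hc0 : ∀ y, |c y 0| ≤ 1 := fun y => (effect_bound (hc y)).1
  have hc1 : ∀ y, |c y 1| ≤ 1 := fun y => (effect_bound (hc y)).2.1
  set a : Fin n → ℝ := fun y => ms l y 0 with ha
  set b : Fin n → ℝ := fun y => ms l y 1 with hb
  set tt : Fin n → ℝ := fun y => ms l y 2 with htt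
  have httval : ∀ y, tt y = t y := by
    intro y
    rw [htt]
    simp only [hmc y, Pi.smul_apply, smul_eq_mul, hc2 y, mul_one]
  have habs_a : ∀ y, |a y| ≤ tt y := by
    intro y
    rw [httval y, ha]
    simp only [hmc y, Pi.smul_apply, smul_eq_mul, abs_mul, abs_of_nonneg (ht0 y)]
    calc t y * |c y 0| ≤ t y * 1 := mul_le_mul_of_nonneg_left (hc0 y) (ht0 y)
      _ = t y := mul_one _
  have habs_b : ∀ y, |b y| ≤ tt y := by
    intro y
    rw [httval y, hb]
    simp only [hmc y, Pi.smul_apply, smul_eq_mul, abs_mul, abs_of_nonneg (ht0 y)]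
    calc t y * |c y 1| ≤ t y * 1 := mul_le_mul_of_nonneg_left (hc1 y) (ht0 y)
      _ = t y := mul_one _
  have htt0 : ∀ y, 0 ≤ tt y := fun y => le_trans (abs_nonneg _) (habs_a y)
  have hsa : ∑ y, a y = 0 := by
    have := congrFun hunit 0
    simpa [Finset.sum_apply, sqUnit] using this
  have hsb : ∑ y, b y = 0 := by
    have := congrFun hunit 1
    simpa [Finset.sum_apply, sqUnit] using this
  have hstt : ∑ y, tt y = 1 := by
    have := congrFun hunit 2
    simpa [Finset.sum_apply, sqUnit] using this
  -- the four canonical rows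
  set r : Fin 4 → Fin n → ℝ := fun i y =>
    if i = 0 then tt y + a y else if i = 1 then tt y + b y
    else if i = 2 then tt y - a y else tt y - b y with hr
  have hrnn : ∀ i y, 0 ≤ r i y := by
    intro i y
    have h1 := abs_le.mp (habs_a y)
    have h2 := abs_le.mp (habs_b y)
    fin_cases i <;> simp [hr] <;> linarith [h1.1, h1.2, h2.1, h2.2]
  have hrbal : ∀ y, r 0 y + r 2 y = r 1 y + r 3 y := by
    intro y; simp [hr]
  have hrsum0 : ∑ y, r 0 y = 1 := by
    simp [hr, Finset.sum_add_distrib, hsa, hstt]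
  have hrsum : ∀ i, ∑ y, r i y = ∑ y, r 0 y := by
    intro i
    fin_cases i <;>
      simp [hr, Finset.sum_add_distrib, Finset.sum_sub_distrib, hsa, hsb, hstt]
  obtain ⟨K, w, g, hw0, hgim, hrep⟩ :=
    coreDecomp _ n r le_rfl hrnn hrbal hrsum
  have hwsum : ∑ k, w k = 1 := by
    have h1 : ∑ y, r 0 y = ∑ k, w k := by
      calc ∑ y, r 0 y = ∑ y, ∑ k, w k * (if g k 0 = y then 1 else 0) :=
            Finset.sum_congr rfl (fun y _ => hrep 0 y)
        _ = ∑ k, ∑ y, w k * (if g k 0 = y then 1 else 0) := Finset.sum_comm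
        _ = ∑ k, w k := by
            apply Finset.sum_congr rfl
            intro k _
            rw [← Finset.mul_sum, Finset.sum_ite_eq]
            simp
    rw [← h1, hrsum0]
  -- state coefficients
  set u : Fin m → ℝ := fun x => st x l 0 with hu
  set v : Fin m → ℝ := fun x => st x l 1 with hv
  have huv : ∀ x, |u x| + |v x| ≤ 1 := fun x => (state_bound (hst x l)).1
  have hst2 : ∀ x, st x l 2 = 1 := fun x => (state_bound (hst x l)).2
  set lam : Fin m → Fin 4 → ℝ := fun x i =>
    if i = 0 then max (u x) 0 + (1 - |u x| - |v x|)/2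
    else if i = 1 then max (v x) 0
    else if i = 2 then max (-(u x)) 0 + (1 - |u x| - |v x|)/2
    else max (-(v x)) 0 with hlam
  have hl0 : ∀ x i, 0 ≤ lam x i := by
    intro x i
    have hs : 0 ≤ (1 - |u x| - |v x|)/2 := by
      have := huv x; linarith
    fin_cases i <;> simp [hlam] <;>
      first
        | linarith [le_max_right (u x) 0]
        | linarith [le_max_right (v x) 0]
        | linarith [le_max_right (-(u x)) 0]
        | linarith [le_max_right (-(v x)) 0]
  have hl1 : ∀ x, ∑ i, lam x i = 1 := by
    intro x
    rw [Fin.sum_univ_four]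
    simp only [hlam]
    simp
    have h1 := max_neg_add (u x)
    have h2 := max_neg_add (v x)
    linarith
  have hM : ∀ x y, st x l ⬝ᵥ ms l y = ∑ i, lam x i * r i y := by
    intro x y
    have hd : st x l ⬝ᵥ ms l y = u x * a y + v x * b y + tt y := by
      simp only [dotProduct, Fin.sum_univ_three, hst2 x, one_mul, hu, hv, ha, hb, htt]
    rw [hd, Fin.sum_univ_four]
    simp only [hlam, hr]
    simp
    have h1 := max_neg_sub (u x)
    have h2 := max_neg_sub (v x)
    have h3 := max_neg_add (u x)
    have h4 := max_neg_add (v x)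
    linear_combination (-(tt y)) * h3 + (-(tt y)) * h4 + (-(a y)) * h1 + (-(b y)) * h2
  have hMeq : (fun x y => st x l ⬝ᵥ ms l y)
      = ∑ k, w k • (fun x y => ∑ i, lam x i * (if g k i = y then (1:ℝ) else 0)) := by
    funext x y
    simp only [Finset.sum_apply, Pi.smul_apply, smul_eq_mul]
    rw [hM x y]
    calc ∑ i, lam x i * r i y
        = ∑ i, lam x i * ∑ k, w k * (if g k i = y then 1 else 0) :=
          Finset.sum_congr rfl (fun i _ => by rw [hrep i y])
      _ = ∑ i, ∑ k, lam x i * (w k * (if g k i = y then 1 else 0)) :=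
          Finset.sum_congr rfl (fun i _ => Finset.mul_sum _ _ _)
      _ = ∑ k, ∑ i, lam x i * (w k * (if g k i = y then 1 else 0)) := Finset.sum_comm
      _ = ∑ k, w k * ∑ i, lam x i * (if g k i = y then 1 else 0) := by
          apply Finset.sum_congr rfl
          intro k _
          rw [Finset.mul_sum]
          apply Finset.sum_congr rfl
          intro i _
          ring
  rw [hMeq]
  exact (convex_convexHull ℝ _).sum_mem (fun k _ => hw0 k) hwsum
    (fun k _ => rowMix lam hl0 hl1 (g k) (hgim k))

lemma classicalPolytope_mono (m n : ℕ) {d d' : ℕ} (h : d ≤ d') :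
    classicalPolytope m n d ⊆ classicalPolytope m n d' := by
  apply convexHull_mono
  rintro v ⟨g, hg, hv⟩
  exact ⟨g, le_trans hg h, hv⟩

/-- the identity correlation on two inputs/outputs -/
def idCorr : Fin 2 → Fin 2 → ℝ := fun x y => if x = y then 1 else 0

lemma idCorr_mem_Psq : idCorr ∈ Psq 2 2 := by
  refine ⟨1, fun _ => 1, fun x _ => if x = 0 then sqState 0 else sqState 2,
    fun _ y => if y = 0 then (1/2 : ℝ) • sqEffect 0 else (1/2 : ℝ) • sqEffect 2,
    fun _ => zero_le_one, by simp, ?_, ?_, ?_⟩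
  · intro x l
    by_cases hx : x = 0 <;>
      simp [hx, subset_convexHull ℝ (Set.range sqState) ⟨0, rfl⟩,
        subset_convexHull ℝ (Set.range sqState) ⟨2, rfl⟩]
  · intro l
    constructor
    · intro y
      by_cases hy : y = 0
      · exact ⟨1/2, by norm_num, sqEffect 0,
          subset_convexHull ℝ _ ⟨0, rfl⟩, by simp [hy]⟩
      · exact ⟨1/2, by norm_num, sqEffect 2,
          subset_convexHull ℝ _ ⟨2, rfl⟩, by simp [hy]⟩
    · rw [Fin.sum_univ_two]
      funext j
      fin_cases j <;> norm_num [sqEffect, sqUnit, Matrix.cons_val_two, Matrix.vecHead, Matrix.vecTail]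
  · intro x y
    rw [Fin.sum_univ_one]
    fin_cases x <;> fin_cases y <;>
      norm_num [idCorr, dotProduct, Fin.sum_univ_three, sqState, sqEffect, Matrix.cons_val_two, Matrix.vecHead, Matrix.vecTail]

lemma idCorr_not_mem : idCorr ∉ classicalPolytope 2 2 1 := by
  intro hmem
  have hsub : classicalPolytope 2 2 1 ⊆ {M : Fin 2 → Fin 2 → ℝ | M 0 0 = M 1 0} := by
    apply convexHull_min
    · rintro v ⟨g, hg, hv⟩
      have hcard : ((univ : Finset (Fin 2)).image g).card ≤ 1 := hg
      have hgeq : g 0 = g 1 := by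
        have h0 : g 0 ∈ (univ : Finset (Fin 2)).image g :=
          Finset.mem_image.mpr ⟨0, mem_univ _, rfl⟩
        have h1 : g 1 ∈ (univ : Finset (Fin 2)).image g :=
          Finset.mem_image.mpr ⟨1, mem_univ _, rfl⟩
        exact Finset.card_le_one.mp hcard _ h0 _ h1
      simp only [Set.mem_setOf_eq, hv 0 0, hv 1 0, hgeq]
    · rintro M1 hM1 M2 hM2 a b _ _ _
      simp only [Set.mem_setOf_eq] at *
      simp [Pi.add_apply, Pi.smul_apply, smul_eq_mul, hM1, hM2]
  have := hsub hmem
  simp only [Set.mem_setOf_eq, idCorr] at this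
  norm_num at this


/-- the signaling dimension of the square bit is two. -/
theorem signaling_dimension_squit_eq_two :
    IsLeast {d : ℕ | ∀ m n : ℕ, 0 < m → 0 < n →
      Psq m n ⊆ classicalPolytope m n d} 2 := by
  constructor
  · intro m n _ _
    exact psq_subset_two m n
  · intro d hd
    by_contra h
    push_neg at h
    have h1 : Psq 2 2 ⊆ classicalPolytope 2 2 d := hd 2 2 (by norm_num) (by norm_num)
    exact idCorr_not_mem
      (classicalPolytope_mono 2 2 (by omega : d ≤ 1) (h1 idCorr_mem_Psq))

end
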